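/- The up operator and dual down operator satisfy the commutation relation D*_y ∘ U_x = (1+xy) · U_x ∘ D*_y as operators on formal power series with partition coefficients. -/

import Mathlib

/-- A partition, encoded as a weakly decreasing eventually-zero sequence of
natural numbers (`part i` is the `(i+1)`-st part). -/
structure Ptn where
  part : ℕ → ℕ
  anti : Antitone part
  fin : ∃ N, ∀ n, N ≤ n → part n = 0

namespace Ptn

/-- The number of cells of the skew diagram `lam / mu`. -/
noncomputable def skewSize (lam mu : Ptn) : ℕ := ∑ᶠ i, (lam.part i - mu.part i)

/-- `HStrip mu lam` means `mu ≺ lam`, i.e. `mu ⊆ lam` and the skew diagram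
`lam/mu` is a horizontal strip (at most one cell in each column). -/
def HStrip (mu lam : Ptn) : Prop :=
  (∀ i, mu.part i ≤ lam.part i) ∧ ∀ i, lam.part (i + 1) ≤ mu.part i

/-- `VStrip mu lam` means `mu ≺' lam`, i.e. `mu ⊆ lam` and the skew diagram
`lam/mu` is a vertical strip (at most one cell in each row). -/
def VStrip (mu lam : Ptn) : Prop :=
  (∀ i, mu.part i ≤ lam.part i) ∧ ∀ i, lam.part i ≤ mu.part i + 1

/-- The union `lam ∪ rho` of two Young diagrams. -/
def union (a b : Ptn) : Ptn where
  part i := max (a.part i) (b.part i)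
  anti := fun _ _ h => max_le_max (a.anti h) (b.anti h)
  fin := by
    obtain ⟨N, hN⟩ := a.fin
    obtain ⟨M, hM⟩ := b.fin
    exact ⟨max N M, fun n hn => by
      show max (a.part n) (b.part n) = 0
      rw [hN n (le_trans (le_max_left _ _) hn), hM n (le_trans (le_max_right _ _) hn)]
      rfl⟩

/-- The intersection `lam ∩ rho` of two Young diagrams. -/
def inter (a b : Ptn) : Ptn where
  part i := min (a.part i) (b.part i)
  anti := fun _ _ h => min_le_min (a.anti h) (b.anti h)
  fin := by
    obtain ⟨N, hN⟩ := a.fin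
    exact ⟨N, fun n hn => by
      show min (a.part n) (b.part n) = 0
      simp [hN n hn]⟩

/-- The empty partition. -/
def empty : Ptn := ⟨fun _ => 0, fun _ _ _ => le_refl 0, ⟨0, fun _ _ => rfl⟩⟩

/-- The conjugate partition: `(conj lam).part j` is the length of column `j`. -/
noncomputable def conj (lam : Ptn) : Ptn where
  part j := Set.ncard {i | j < lam.part i}
  anti := by
    intro j k h
    apply Set.ncard_le_ncard
    · intro i hi
      exact lt_of_le_of_lt h hi
    · obtain ⟨N, hN⟩ := lam.fin
      apply Set.Finite.subset (Set.finite_Iio N)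
      intro i hi
      by_contra hc
      have hNi : N ≤ i := not_lt.mp (fun h => hc (Set.mem_Iio.mpr h))
      rw [Set.mem_setOf_eq, hN i hNi] at hi
      exact Nat.not_lt_zero j hi
  fin := by
    refine ⟨lam.part 0, fun n hn => ?_⟩
    have h : {i | n < lam.part i} = (∅ : Set ℕ) := by
      ext i
      simp only [Set.mem_setOf_eq, Set.mem_empty_iff_false, iff_false, not_lt]
      exact le_trans (lam.anti (Nat.zero_le i)) hn
    show Set.ncard {i | n < lam.part i} = 0
    rw [h, Set.ncard_empty]

end Ptn

namespace Ptn

/-- `Y⟦x,y⟧`: formal power series in two variables whose coefficients are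
finite formal `ℚ`-linear combinations of partitions.  The variable `x` is
variable `0` and `y` is variable `1`. -/
def YSeries : Type := (Fin 2 →₀ ℕ) → (Ptn →₀ ℚ)

/-- The degree-`k` piece of the up operator on finite formal sums of
partitions: `λ ↦ Σ_{ν ≻ λ, |ν/λ| = k} ν`. -/
noncomputable def upStep (k : ℕ) (c : Ptn →₀ ℚ) : Ptn →₀ ℚ :=
  c.sum fun lam a =>
    a • ∑ᶠ ν ∈ {ν : Ptn | HStrip lam ν ∧ skewSize ν lam = k}, Finsupp.single ν (1 : ℚ)

/-- The degree-`k` piece of the down operator: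
`λ ↦ Σ_{μ ≺ λ, |λ/μ| = k} μ`. -/
noncomputable def downStep (k : ℕ) (c : Ptn →₀ ℚ) : Ptn →₀ ℚ :=
  c.sum fun lam a =>
    a • ∑ᶠ mu ∈ {mu : Ptn | HStrip mu lam ∧ skewSize lam mu = k}, Finsupp.single mu (1 : ℚ)

/-- The degree-`k` piece of the dual down operator:
`λ ↦ Σ_{μ ≺' λ, |λ/μ| = k} μ`. -/
noncomputable def dualDownStep (k : ℕ) (c : Ptn →₀ ℚ) : Ptn →₀ ℚ :=
  c.sum fun lam a =>
    a • ∑ᶠ mu ∈ {mu : Ptn | VStrip mu lam ∧ skewSize lam mu = k}, Finsupp.single mu (1 : ℚ)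

/-- The up operator `U_x` on `Y⟦x,y⟧` (its coefficient at a monomial `d` is
obtained by convolving in the `x`-variable). -/
noncomputable def Uop (F : YSeries) : YSeries :=
  fun d => ∑ k ∈ Finset.range (d 0 + 1), upStep k (F (d - Finsupp.single 0 k))

/-- The down operator `D_y` on `Y⟦x,y⟧`. -/
noncomputable def Dop (F : YSeries) : YSeries :=
  fun d => ∑ k ∈ Finset.range (d 1 + 1), downStep k (F (d - Finsupp.single 1 k))

/-- The dual down operator `D*_y` on `Y⟦x,y⟧`. -/
noncomputable def DualDop (F : YSeries) : YSeries :=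
  fun d => ∑ k ∈ Finset.range (d 1 + 1), dualDownStep k (F (d - Finsupp.single 1 k))

/-- Multiplication of an element of `Y⟦x,y⟧` by a scalar formal power series
in `x, y`, defined by convolution of coefficients. -/
noncomputable def smulSeries (phi : MvPowerSeries (Fin 2) ℚ) (F : YSeries) : YSeries :=
  fun d => ∑ p ∈ Finset.HasAntidiagonal.antidiagonal d, MvPowerSeries.coeff p.1 phi • F p.2

end Ptn

namespace Ptn

open Finset

theorem pext {a b : Ptn} (h : ∀ i, a.part i = b.part i) : a = b := by
  cases a; cases b
  simp only [Ptn.mk.injEq]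
  exact funext h

theorem exists_bound (a b : Ptn) : ∃ N, ∀ i, N ≤ i → a.part i = 0 ∧ b.part i = 0 := by
  obtain ⟨N, hN⟩ := a.fin
  obtain ⟨M, hM⟩ := b.fin
  exact ⟨max N M, fun i hi => ⟨hN i (le_trans (le_max_left _ _) hi),
    hM i (le_trans (le_max_right _ _) hi)⟩⟩

theorem skewSize_eq_sum (lam mu : Ptn) (N : ℕ) (h : ∀ i, N ≤ i → lam.part i = 0) :
    skewSize lam mu = ∑ i ∈ range N, (lam.part i - mu.part i) := by
  apply finsum_eq_sum_of_support_subset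
  intro i hi
  simp only [Function.mem_support, ne_eq] at hi
  simp only [coe_range, Set.mem_Iio]
  by_contra hc
  exact hi (by rw [h i (not_lt.mp hc)]; exact Nat.zero_sub _)

/-- A set of partitions pointwise bounded by an eventually-zero function is finite. -/
theorem finite_of_bounded (g : ℕ → ℕ) (N : ℕ) (hg : ∀ i, N ≤ i → g i = 0) :
    {nu : Ptn | ∀ i, nu.part i ≤ g i}.Finite := by
  have h1 : Set.Finite {h : Fin N → ℕ | ∀ i, h i ≤ g i} := by
    apply Set.Finite.subset (Set.Finite.pi (t := fun i : Fin N => Set.Iic (g i))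
      (fun i => Set.finite_Iic _))
    intro h hh
    exact fun i _ => hh i
  apply Set.Finite.of_finite_image (f := fun nu : Ptn => (fun i : Fin N => nu.part i))
  · exact h1.subset (by rintro _ ⟨nu, hnu, rfl⟩; exact fun i => hnu i)
  · intro a ha b hb hab
    apply pext
    intro i
    by_cases hi : i < N
    · exact congrFun hab ⟨i, hi⟩
    · have hz : g i = 0 := hg i (not_lt.mp hi)
      have := ha i; have := hb i; omega

theorem finite_up (lam : Ptn) (k : ℕ) :
    {nu : Ptn | HStrip lam nu ∧ skewSize nu lam = k}.Finite := by
  obtain ⟨N, hN⟩ := lam.fin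
  apply Set.Finite.subset (finite_of_bounded
    (fun i => if i = 0 then lam.part 0 + k else lam.part (i-1)) (N+1) ?_)
  · rintro nu ⟨⟨h1, h2⟩, h3⟩
    intro i
    cases i with
    | zero =>
      simp only [if_pos rfl]
      obtain ⟨M, hM⟩ := nu.fin
      rw [skewSize_eq_sum nu lam (M+1) (fun i hi => hM i (by omega))] at h3
      have hmem : (0:ℕ) ∈ range (M+1) := by simp
      have h4 := Finset.single_le_sum (f := fun i => nu.part i - lam.part i)
        (fun i _ => Nat.zero_le _) hmem
      rw [h3] at h4
      have h5 := h1 0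
      show nu.part 0 ≤ lam.part 0 + k
      omega
    | succ n =>
      show nu.part (n+1) ≤ if n+1 = 0 then lam.part 0 + k else lam.part (n+1-1)
      rw [if_neg (Nat.succ_ne_zero n)]
      exact h2 n
  · intro i hi
    show (if i = 0 then lam.part 0 + k else lam.part (i-1)) = 0
    rw [if_neg (by omega : ¬ i = 0)]
    exact hN _ (by omega)

theorem finite_down (lam : Ptn) (j : ℕ) :
    {mu : Ptn | VStrip mu lam ∧ skewSize lam mu = j}.Finite := by
  obtain ⟨N, hN⟩ := lam.fin
  exact Set.Finite.subset (finite_of_bounded lam.part N hN)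
    (fun mu hmu i => hmu.1.1 i)

end Ptn

namespace Ptn

open Finset

section Core

variable (lam mu : Ptn)

/-- Positions where a `nu` between `lam` and `mu` can branch. -/
def PI (i : ℕ) : Prop :=
  lam.part i ≤ mu.part i ∧ (i = 0 ∨ mu.part i < lam.part (i - 1))

/-- Positions where a `rho` below `lam` and `mu` can branch. -/
def PJ (i : ℕ) : Prop :=
  lam.part i ≤ mu.part i ∧ mu.part (i + 1) < lam.part i

open Classical in
/-- The partition `nu` determined by a branching set `T`. -/
noncomputable def nuOf (T : Finset ℕ) : Ptn where
  part i := if i ∈ T ∧ PI lam mu i then mu.part i + 1 else max (lam.part i) (mu.part i)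
  anti := by
    apply antitone_nat_of_succ_le
    intro i
    have hge : max (lam.part i) (mu.part i) ≤
        (if i ∈ T ∧ PI lam mu i then mu.part i + 1 else max (lam.part i) (mu.part i)) := by
      split_ifs with h
      · have := h.2.1
        omega
      · exact le_refl _
    show (if i+1 ∈ T ∧ PI lam mu (i+1) then _ else _) ≤ _
    refine le_trans ?_ hge
    split_ifs with h
    · have h2 : mu.part (i+1) < lam.part i := by
        have := h.2.2
        rcases this with h' | h'
        · omega
        · simpa using h'
      exact le_trans (by omega) (le_max_left _ _)
    · exact max_le_max (lam.anti (Nat.le_succ i)) (mu.anti (Nat.le_succ i))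
  fin := by
    obtain ⟨N, hN⟩ := exists_bound lam mu
    refine ⟨N + 1, fun n hn => ?_⟩
    have h1 : lam.part n = 0 := (hN n (by omega)).1
    have h2 : mu.part n = 0 := (hN n (by omega)).2
    have h3 : lam.part (n - 1) = 0 := (hN (n-1) (by omega)).1
    show (if n ∈ T ∧ PI lam mu n then _ else _) = 0
    rw [if_neg]
    · omega
    · rintro ⟨-, -, h | h⟩
      · omega
      · omega

open Classical in
/-- The partition `rho` determined by a branching set `T`. -/
noncomputable def rhoOf (T : Finset ℕ) : Ptn where
  part i := if i ∈ T ∧ PJ lam mu i then lam.part i - 1 else min (lam.part i) (mu.part i)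
  anti := by
    apply antitone_nat_of_succ_le
    intro i
    have hle : ∀ j, (if j ∈ T ∧ PJ lam mu j then lam.part j - 1
        else min (lam.part j) (mu.part j)) ≤ min (lam.part j) (mu.part j) := by
      intro j
      split_ifs with h
      · have := h.2.1
        omega
      · exact le_refl _
    show (if i+1 ∈ T ∧ PJ lam mu (i+1) then _ else _) ≤
      (if i ∈ T ∧ PJ lam mu i then lam.part i - 1 else min (lam.part i) (mu.part i))
    refine le_trans (hle (i+1)) ?_
    split_ifs with h
    · have h2 : mu.part (i+1) < lam.part i := h.2.2
      have h3 : mu.part (i+1) ≥ min (lam.part (i+1)) (mu.part (i+1)) := min_le_right _ _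
      omega
    · exact min_le_min (lam.anti (Nat.le_succ i)) (mu.anti (Nat.le_succ i))
  fin := by
    obtain ⟨N, hN⟩ := exists_bound lam mu
    refine ⟨N, fun n hn => ?_⟩
    have h1 : lam.part n = 0 := (hN n hn).1
    have h2 : mu.part n = 0 := (hN n hn).2
    show (if n ∈ T ∧ PJ lam mu n then _ else _) = 0
    split_ifs <;> omega

variable (N : ℕ)

open Classical in
/-- The branching positions for `nu`, as a finset. -/
noncomputable def IFin : Finset ℕ := (range (N+1)).filter (PI lam mu)

open Classical in
/-- The branching positions for `rho`, as a finset. -/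
noncomputable def JFin : Finset ℕ := (range N).filter (PJ lam mu)

theorem mem_IFin (hN : ∀ i, N ≤ i → lam.part i = 0 ∧ mu.part i = 0) (i : ℕ) : i ∈ IFin lam mu N ↔ PI lam mu i := by
  classical
  rw [IFin, Finset.mem_filter, Finset.mem_range]
  constructor
  · exact fun h => h.2
  · intro h
    refine ⟨?_, h⟩
    by_contra hc
    obtain ⟨-, h2 | h2⟩ := h
    · omega
    · have := (hN (i-1) (by omega)).1
      omega

theorem mem_JFin (hN : ∀ i, N ≤ i → lam.part i = 0 ∧ mu.part i = 0) (i : ℕ) : i ∈ JFin lam mu N ↔ PJ lam mu i := by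
  classical
  rw [JFin, Finset.mem_filter, Finset.mem_range]
  constructor
  · exact fun h => h.2
  · intro h
    refine ⟨?_, h⟩
    by_contra hc
    have := (hN i (by omega)).1
    have := h.2
    omega

end Core

end Ptn

namespace Ptn

open Finset

section Core2

variable (lam mu : Ptn) (N : ℕ)

open Classical in
theorem nuOf_part (T : Finset ℕ) (i : ℕ) :
    (nuOf lam mu T).part i =
      if i ∈ T ∧ PI lam mu i then mu.part i + 1 else max (lam.part i) (mu.part i) := rfl

open Classical in
theorem rhoOf_part (T : Finset ℕ) (i : ℕ) :
    (rhoOf lam mu T).part i =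
      if i ∈ T ∧ PJ lam mu i then lam.part i - 1 else min (lam.part i) (mu.part i) := rfl

theorem nuOf_hstrip (E2 : ∀ i, mu.part (i+1) ≤ lam.part i) (T : Finset ℕ) :
    HStrip lam (nuOf lam mu T) := by
  constructor
  · intro i
    rw [nuOf_part]
    split_ifs with h
    · have := h.2.1; omega
    · omega
  · intro i
    rw [nuOf_part]
    split_ifs with h
    · rcases h.2.2 with h' | h'
      · omega
      · simpa using h'
    · have h1 := lam.anti (by omega : i ≤ i + 1)
      have h2 := E2 i
      omega

theorem nuOf_vstrip (E1 : ∀ i, lam.part i ≤ mu.part i + 1) (T : Finset ℕ) :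
    VStrip mu (nuOf lam mu T) := by
  constructor
  · intro i
    rw [nuOf_part]; split_ifs with h <;> omega
  · intro i
    rw [nuOf_part]; split_ifs with h
    · omega
    · have := E1 i; omega

theorem rhoOf_vstrip (E1 : ∀ i, lam.part i ≤ mu.part i + 1) (T : Finset ℕ) :
    VStrip (rhoOf lam mu T) lam := by
  constructor
  · intro i
    rw [rhoOf_part]; split_ifs with h <;> omega
  · intro i
    rw [rhoOf_part]; split_ifs with h
    · have := h.2.2; omega
    · have := E1 i; omega

theorem rhoOf_hstrip (E2 : ∀ i, mu.part (i+1) ≤ lam.part i) (T : Finset ℕ) :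
    HStrip (rhoOf lam mu T) mu := by
  constructor
  · intro i
    rw [rhoOf_part]; split_ifs with h
    · have := h.2.1; omega
    · omega
  · intro i
    rw [rhoOf_part]; split_ifs with h
    · have := h.2.2; omega
    · have h1 := E2 i
      have h2 := mu.anti (by omega : i ≤ i + 1)
      omega

variable (hN : ∀ i, N ≤ i → lam.part i = 0 ∧ mu.part i = 0)

theorem card_indicator_sum (T : Finset ℕ) (M : ℕ) (hT : T ⊆ range M) :
    ∑ i ∈ range M, (if i ∈ T then 1 else 0) = T.card := by
  classical
  rw [← Finset.card_filter, Finset.filter_mem_eq_inter, Finset.inter_eq_right.mpr hT]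

include hN in
theorem nuOf_size_left (T : Finset ℕ) (hT : T ⊆ IFin lam mu N) :
    skewSize (nuOf lam mu T) lam = skewSize (union lam mu) lam + T.card := by
  classical
  have hTr : T ⊆ range (N + 1) := fun i hi => Finset.filter_subset _ _ (hT hi)
  have hb : ∀ i, N + 1 ≤ i → (nuOf lam mu T).part i = 0 := by
    intro i hi
    rw [nuOf_part, if_neg (fun hc => by have := Finset.mem_range.mp (hTr hc.1); omega)]
    have := hN i (by omega)
    omega
  have hu : ∀ i, N + 1 ≤ i → (union lam mu).part i = 0 := by
    intro i hi
    have := hN i (by omega)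
    show max (lam.part i) (mu.part i) = 0
    omega
  rw [skewSize_eq_sum _ _ (N+1) hb, skewSize_eq_sum (union lam mu) lam (N+1) hu]
  have : ∀ i ∈ range (N+1), (nuOf lam mu T).part i - lam.part i
      = ((union lam mu).part i - lam.part i) + (if i ∈ T then 1 else 0) := by
    intro i _
    by_cases hiT : i ∈ T
    · have hPI := (mem_IFin lam mu N hN i).mp (hT hiT)
      rw [nuOf_part, if_pos ⟨hiT, hPI⟩, if_pos hiT]
      have := hPI.1
      show mu.part i + 1 - lam.part i = max (lam.part i) (mu.part i) - lam.part i + 1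
      omega
    · rw [nuOf_part, if_neg (fun hc => hiT hc.1), if_neg hiT]
      rfl
  rw [Finset.sum_congr rfl this, Finset.sum_add_distrib,
    card_indicator_sum T (N+1) hTr]

include hN in
theorem nuOf_size_right (T : Finset ℕ) (hT : T ⊆ IFin lam mu N) :
    skewSize (nuOf lam mu T) mu = skewSize (union lam mu) mu + T.card := by
  classical
  have hTr : T ⊆ range (N + 1) := fun i hi => Finset.filter_subset _ _ (hT hi)
  have hb : ∀ i, N + 1 ≤ i → (nuOf lam mu T).part i = 0 := by
    intro i hi
    rw [nuOf_part, if_neg (fun hc => by have := Finset.mem_range.mp (hTr hc.1); omega)]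
    have := hN i (by omega)
    omega
  have hu : ∀ i, N + 1 ≤ i → (union lam mu).part i = 0 := by
    intro i hi
    have := hN i (by omega)
    show max (lam.part i) (mu.part i) = 0
    omega
  rw [skewSize_eq_sum _ _ (N+1) hb, skewSize_eq_sum (union lam mu) mu (N+1) hu]
  have : ∀ i ∈ range (N+1), (nuOf lam mu T).part i - mu.part i
      = ((union lam mu).part i - mu.part i) + (if i ∈ T then 1 else 0) := by
    intro i _
    by_cases hiT : i ∈ T
    · have hPI := (mem_IFin lam mu N hN i).mp (hT hiT)
      rw [nuOf_part, if_pos ⟨hiT, hPI⟩, if_pos hiT]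
      have := hPI.1
      show mu.part i + 1 - mu.part i = max (lam.part i) (mu.part i) - mu.part i + 1
      omega
    · rw [nuOf_part, if_neg (fun hc => hiT hc.1), if_neg hiT]
      rfl
  rw [Finset.sum_congr rfl this, Finset.sum_add_distrib,
    card_indicator_sum T (N+1) hTr]

include hN in
theorem rhoOf_size_left (T : Finset ℕ) (hT : T ⊆ JFin lam mu N) :
    skewSize lam (rhoOf lam mu T) = skewSize lam (inter lam mu) + T.card := by
  classical
  have hTr : T ⊆ range (N + 1) := fun i hi =>
    Finset.mem_range.mpr (by have := Finset.mem_range.mp (Finset.filter_subset _ _ (hT hi)); omega)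
  have hl : ∀ i, N + 1 ≤ i → lam.part i = 0 := fun i hi => (hN i (by omega)).1
  rw [skewSize_eq_sum _ _ (N+1) hl, skewSize_eq_sum lam (inter lam mu) (N+1) hl]
  have : ∀ i ∈ range (N+1), lam.part i - (rhoOf lam mu T).part i
      = (lam.part i - (inter lam mu).part i) + (if i ∈ T then 1 else 0) := by
    intro i _
    by_cases hiT : i ∈ T
    · have hPJ := (mem_JFin lam mu N hN i).mp (hT hiT)
      rw [rhoOf_part, if_pos ⟨hiT, hPJ⟩, if_pos hiT]
      have h1 := hPJ.1
      have h2 := hPJ.2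
      show lam.part i - (lam.part i - 1) = lam.part i - min (lam.part i) (mu.part i) + 1
      omega
    · rw [rhoOf_part, if_neg (fun hc => hiT hc.1), if_neg hiT]
      rfl
  rw [Finset.sum_congr rfl this, Finset.sum_add_distrib,
    card_indicator_sum T (N+1) hTr]

include hN in
theorem rhoOf_size_right (T : Finset ℕ) (hT : T ⊆ JFin lam mu N) :
    skewSize mu (rhoOf lam mu T) = skewSize mu (inter lam mu) + T.card := by
  classical
  have hTr : T ⊆ range (N + 1) := fun i hi =>
    Finset.mem_range.mpr (by have := Finset.mem_range.mp (Finset.filter_subset _ _ (hT hi)); omega)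
  have hm : ∀ i, N + 1 ≤ i → mu.part i = 0 := fun i hi => (hN i (by omega)).2
  rw [skewSize_eq_sum _ _ (N+1) hm, skewSize_eq_sum mu (inter lam mu) (N+1) hm]
  have : ∀ i ∈ range (N+1), mu.part i - (rhoOf lam mu T).part i
      = (mu.part i - (inter lam mu).part i) + (if i ∈ T then 1 else 0) := by
    intro i _
    by_cases hiT : i ∈ T
    · have hPJ := (mem_JFin lam mu N hN i).mp (hT hiT)
      rw [rhoOf_part, if_pos ⟨hiT, hPJ⟩, if_pos hiT]
      have h1 := hPJ.1
      have h2 := hPJ.2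
      show mu.part i - (lam.part i - 1) = mu.part i - min (lam.part i) (mu.part i) + 1
      omega
    · rw [rhoOf_part, if_neg (fun hc => hiT hc.1), if_neg hiT]
      rfl
  rw [Finset.sum_congr rfl this, Finset.sum_add_distrib,
    card_indicator_sum T (N+1) hTr]

theorem base_left : skewSize lam (inter lam mu) = skewSize (union lam mu) mu := by
  obtain ⟨M, hM⟩ := exists_bound lam mu
  have hl : ∀ i, M ≤ i → lam.part i = 0 := fun i hi => (hM i hi).1
  have hu : ∀ i, M ≤ i → (union lam mu).part i = 0 := by
    intro i hi
    have := hM i hi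
    show max (lam.part i) (mu.part i) = 0
    omega
  rw [skewSize_eq_sum _ _ M hl, skewSize_eq_sum _ _ M hu]
  apply Finset.sum_congr rfl
  intro i _
  show lam.part i - min (lam.part i) (mu.part i) = max (lam.part i) (mu.part i) - mu.part i
  omega

theorem base_right : skewSize mu (inter lam mu) = skewSize (union lam mu) lam := by
  obtain ⟨M, hM⟩ := exists_bound lam mu
  have hm : ∀ i, M ≤ i → mu.part i = 0 := fun i hi => (hM i hi).2
  have hu : ∀ i, M ≤ i → (union lam mu).part i = 0 := by
    intro i hi
    have := hM i hi
    show max (lam.part i) (mu.part i) = 0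
    omega
  rw [skewSize_eq_sum _ _ M hm, skewSize_eq_sum _ _ M hu]
  apply Finset.sum_congr rfl
  intro i _
  show mu.part i - min (lam.part i) (mu.part i) = max (lam.part i) (mu.part i) - lam.part i
  omega

include hN in
theorem nuOf_mem_iff (T : Finset ℕ) (hT : T ⊆ IFin lam mu N) (i : ℕ) :
    i ∈ T ↔ PI lam mu i ∧ (nuOf lam mu T).part i = mu.part i + 1 := by
  constructor
  · intro h
    have hPI := (mem_IFin lam mu N hN i).mp (hT h)
    exact ⟨hPI, by rw [nuOf_part, if_pos ⟨h, hPI⟩]⟩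
  · rintro ⟨hPI, hpart⟩
    by_contra hc
    rw [nuOf_part, if_neg (fun hcon => hc hcon.1)] at hpart
    have := hPI.1
    omega

include hN in
theorem rhoOf_mem_iff (T : Finset ℕ) (hT : T ⊆ JFin lam mu N) (i : ℕ) :
    i ∈ T ↔ PJ lam mu i ∧ (rhoOf lam mu T).part i = lam.part i - 1 := by
  constructor
  · intro h
    have hPJ := (mem_JFin lam mu N hN i).mp (hT h)
    exact ⟨hPJ, by rw [rhoOf_part, if_pos ⟨h, hPJ⟩]⟩
  · rintro ⟨hPJ, hpart⟩
    by_contra hc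
    rw [rhoOf_part, if_neg (fun hcon => hc hcon.1)] at hpart
    have h1 := hPJ.1
    have h2 := hPJ.2
    omega

include hN in
theorem nuOf_inj (T T' : Finset ℕ) (hT : T ⊆ IFin lam mu N) (hT' : T' ⊆ IFin lam mu N)
    (h : nuOf lam mu T = nuOf lam mu T') : T = T' := by
  ext i
  rw [nuOf_mem_iff lam mu N hN T hT i, nuOf_mem_iff lam mu N hN T' hT' i, h]

include hN in
theorem rhoOf_inj (T T' : Finset ℕ) (hT : T ⊆ JFin lam mu N) (hT' : T' ⊆ JFin lam mu N)
    (h : rhoOf lam mu T = rhoOf lam mu T') : T = T' := by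
  ext i
  rw [rhoOf_mem_iff lam mu N hN T hT i, rhoOf_mem_iff lam mu N hN T' hT' i, h]

include hN in
theorem nu_classify (nu : Ptn) (h1 : HStrip lam nu) (h2 : VStrip mu nu) :
    ∃ T, T ⊆ IFin lam mu N ∧ nu = nuOf lam mu T := by
  classical
  refine ⟨(IFin lam mu N).filter (fun i => nu.part i = mu.part i + 1),
    Finset.filter_subset _ _, ?_⟩
  apply pext
  intro i
  rw [nuOf_part]
  by_cases hPI : PI lam mu i
  · by_cases heq : nu.part i = mu.part i + 1
    · rw [if_pos ⟨Finset.mem_filter.mpr ⟨(mem_IFin lam mu N hN i).mpr hPI, heq⟩, hPI⟩]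
      exact heq
    · have hni : ¬(i ∈ (IFin lam mu N).filter (fun i => nu.part i = mu.part i + 1)
          ∧ PI lam mu i) := by
        rintro ⟨hmem, -⟩
        exact heq (Finset.mem_filter.mp hmem).2
      rw [if_neg hni]
      have ha := hPI.1
      have hb := h2.1 i
      have hc := h2.2 i
      show nu.part i = max (lam.part i) (mu.part i)
      omega
  · rw [if_neg (fun hc => hPI hc.2)]
    show nu.part i = max (lam.part i) (mu.part i)
    simp only [PI, not_and, not_or, not_lt] at hPI
    by_cases hlm : lam.part i ≤ mu.part i
    · obtain ⟨hi0, hle⟩ := hPI hlm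
      have hsub : i - 1 + 1 = i := by omega
      have hnu : nu.part i ≤ lam.part (i-1) := by
        have := h1.2 (i-1)
        rwa [hsub] at this
      have := h2.1 i
      omega
    · have ha := h1.1 i
      have hb := h2.2 i
      omega

include hN in
theorem rho_classify (E2 : ∀ i, mu.part (i+1) ≤ lam.part i) (rho : Ptn)
    (h1 : VStrip rho lam) (h2 : HStrip rho mu) :
    ∃ T, T ⊆ JFin lam mu N ∧ rho = rhoOf lam mu T := by
  classical
  refine ⟨(JFin lam mu N).filter (fun i => rho.part i ≠ lam.part i),
    Finset.filter_subset _ _, ?_⟩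
  apply pext
  intro i
  rw [rhoOf_part]
  by_cases hPJ : PJ lam mu i
  · by_cases hne : rho.part i ≠ lam.part i
    · rw [if_pos ⟨Finset.mem_filter.mpr ⟨(mem_JFin lam mu N hN i).mpr hPJ, hne⟩, hPJ⟩]
      have ha := h1.1 i
      have hb := h1.2 i
      omega
    · have hni : ¬(i ∈ (JFin lam mu N).filter (fun i => rho.part i ≠ lam.part i)
          ∧ PJ lam mu i) := by
        rintro ⟨hmem, -⟩
        exact hne (Finset.mem_filter.mp hmem).2
      rw [if_neg hni]
      push_neg at hne
      have ha := hPJ.1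
      show rho.part i = min (lam.part i) (mu.part i)
      omega
  · rw [if_neg (fun hc => hPJ hc.2)]
    show rho.part i = min (lam.part i) (mu.part i)
    simp only [PJ, not_and, not_lt] at hPJ
    have ha := h1.1 i
    have hb := h1.2 i
    have hc := h2.1 i
    have hd := h2.2 i
    have he := E2 i
    by_cases hlm : lam.part i ≤ mu.part i
    · have := hPJ hlm
      omega
    · omega

end Core2

end Ptn

namespace Ptn

open Finset

theorem card_IJ (lam mu : Ptn) (N : ℕ) (hN : ∀ i, N ≤ i → lam.part i = 0 ∧ mu.part i = 0)
    (E2 : ∀ i, mu.part (i+1) ≤ lam.part i) :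
    (IFin lam mu N).card = (JFin lam mu N).card + 1 := by
  classical
  have step : ∀ i, (if PI lam mu (i+1) then 1 else 0) + (if lam.part i ≤ mu.part i then 1 else 0)
      = (if PJ lam mu i then 1 else 0)
        + (if lam.part (i+1) ≤ mu.part (i+1) then (1:ℕ) else 0) := by
    intro i
    have h1 := E2 i
    have h2 := mu.anti (by omega : i ≤ i+1)
    have h3 := lam.anti (by omega : i ≤ i+1)
    have hne : ¬(i + 1 = 0) := by omega
    simp only [PI, PJ, Nat.add_sub_cancel, eq_false hne, false_or]
    by_cases c1 : lam.part i ≤ mu.part i <;> by_cases c2 : mu.part (i + 1) < lam.part i <;>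
      by_cases c3 : lam.part (i + 1) ≤ mu.part (i + 1) <;> simp [c1, c2, c3] <;> omega
  have base0 : (if PI lam mu 0 then (1:ℕ) else 0)
      = (if lam.part 0 ≤ mu.part 0 then 1 else 0) := by
    simp [PI]
  have tel : ∀ n, (if PI lam mu 0 then (1:ℕ) else 0)
        + ∑ i ∈ range n, (if PI lam mu (i+1) then 1 else 0)
      = (if lam.part n ≤ mu.part n then 1 else 0)
        + ∑ i ∈ range n, (if PJ lam mu i then 1 else 0) := by
    intro n
    induction n with
    | zero => simpa using base0
    | succ n ih =>
      rw [Finset.sum_range_succ, Finset.sum_range_succ]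
      have h2 := step n
      omega
  have hcI : (IFin lam mu N).card = ∑ i ∈ range (N+1), (if PI lam mu i then 1 else 0) := by
    rw [IFin, Finset.card_filter]
  have hcJ : (JFin lam mu N).card = ∑ i ∈ range N, (if PJ lam mu i then 1 else 0) := by
    rw [JFin, Finset.card_filter]
  rw [hcI, hcJ, Finset.sum_range_succ' (fun i => if PI lam mu i then 1 else 0) N]
  have h := tel N
  have hn := hN N (le_refl N)
  rw [if_pos (by omega : lam.part N ≤ mu.part N)] at h
  omega

/-- The set of `nu` counted on the left side. -/
def NuSet (lam mu : Ptn) (k j : ℕ) : Set Ptn :=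
  {nu | HStrip lam nu ∧ skewSize nu lam = k ∧ VStrip mu nu ∧ skewSize nu mu = j}

/-- The set of `rho` counted on the right side. -/
def RhoSet (lam mu : Ptn) (j k : ℕ) : Set Ptn :=
  {rho | VStrip rho lam ∧ skewSize lam rho = j ∧ HStrip rho mu ∧ skewSize mu rho = k}

theorem count_key (lam mu : Ptn) (j k : ℕ) (hj : 1 ≤ j) (hk : 1 ≤ k) :
    (NuSet lam mu k j).ncard
      = (RhoSet lam mu j k).ncard + (RhoSet lam mu (j-1) (k-1)).ncard := by
  classical
  by_cases hE : (∀ i, lam.part i ≤ mu.part i + 1) ∧ (∀ i, mu.part (i+1) ≤ lam.part i)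
  case neg =>
    have hNu : NuSet lam mu k j = ∅ := by
      ext nu
      simp only [NuSet, Set.mem_setOf_eq, Set.mem_empty_iff_false, iff_false]
      rintro ⟨h1, -, h2, -⟩
      exact hE ⟨fun i => le_trans (h1.1 i) (h2.2 i), fun i => le_trans (h2.1 (i+1)) (h1.2 i)⟩
    have hRho : ∀ j' k', RhoSet lam mu j' k' = ∅ := by
      intro j' k'
      ext rho
      simp only [RhoSet, Set.mem_setOf_eq, Set.mem_empty_iff_false, iff_false]
      rintro ⟨h1, -, h2, -⟩
      refine hE ⟨fun i => ?_, fun i => le_trans (h2.2 i) (h1.1 i)⟩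
      have ha := h1.2 i
      have hb := h2.1 i
      omega
    rw [hNu, hRho, hRho]
    simp
  case pos =>
    obtain ⟨E1, E2⟩ := hE
    obtain ⟨N, hN⟩ := exists_bound lam mu
    set bx := skewSize (union lam mu) lam with hbx
    set by' := skewSize (union lam mu) mu with hby
    have hbl : skewSize lam (inter lam mu) = by' := base_left lam mu
    have hbr : skewSize mu (inter lam mu) = bx := base_right lam mu
    have hNuCard : ∀ t, (NuSet lam mu (bx + t) (by' + t)).ncard
        = ((IFin lam mu N).card).choose t := by
      intro t
      have heq : NuSet lam mu (bx+t) (by'+t)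
          = ↑(((IFin lam mu N).powersetCard t).image (nuOf lam mu)) := by
        ext nu
        simp only [NuSet, Set.mem_setOf_eq, Finset.coe_image, Set.mem_image, Finset.mem_coe,
          Finset.mem_powersetCard]
        constructor
        · rintro ⟨h1, h2, h3, h4⟩
          obtain ⟨T, hT, rfl⟩ := nu_classify lam mu N hN nu h1 h3
          refine ⟨T, ⟨hT, ?_⟩, rfl⟩
          rw [nuOf_size_left lam mu N hN T hT] at h2
          omega
        · rintro ⟨T, ⟨hT, hcard⟩, rfl⟩
          exact ⟨nuOf_hstrip lam mu E2 T,
            by rw [nuOf_size_left lam mu N hN T hT, hcard],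
            nuOf_vstrip lam mu E1 T,
            by rw [nuOf_size_right lam mu N hN T hT, hcard]⟩
      rw [heq, Set.ncard_coe_finset, Finset.card_image_of_injOn, Finset.card_powersetCard]
      intro T hT T' hT' h
      have h1 := (Finset.mem_powersetCard.mp (Finset.mem_coe.mp hT)).1
      have h2 := (Finset.mem_powersetCard.mp (Finset.mem_coe.mp hT')).1
      exact nuOf_inj lam mu N hN T T' h1 h2 h
    have hRhoCard : ∀ t, (RhoSet lam mu (by' + t) (bx + t)).ncard
        = ((JFin lam mu N).card).choose t := by
      intro t
      have heq : RhoSet lam mu (by'+t) (bx+t)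
          = ↑(((JFin lam mu N).powersetCard t).image (rhoOf lam mu)) := by
        ext rho
        simp only [RhoSet, Set.mem_setOf_eq, Finset.coe_image, Set.mem_image, Finset.mem_coe,
          Finset.mem_powersetCard]
        constructor
        · rintro ⟨h1, h2, h3, h4⟩
          obtain ⟨T, hT, rfl⟩ := rho_classify lam mu N hN E2 rho h1 h3
          refine ⟨T, ⟨hT, ?_⟩, rfl⟩
          rw [rhoOf_size_left lam mu N hN T hT, hbl] at h2
          omega
        · rintro ⟨T, ⟨hT, hcard⟩, rfl⟩
          exact ⟨rhoOf_vstrip lam mu E1 T,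
            by rw [rhoOf_size_left lam mu N hN T hT, hbl, hcard],
            rhoOf_hstrip lam mu E2 T,
            by rw [rhoOf_size_right lam mu N hN T hT, hbr, hcard]⟩
      rw [heq, Set.ncard_coe_finset, Finset.card_image_of_injOn, Finset.card_powersetCard]
      intro T hT T' hT' h
      have h1 := (Finset.mem_powersetCard.mp (Finset.mem_coe.mp hT)).1
      have h2 := (Finset.mem_powersetCard.mp (Finset.mem_coe.mp hT')).1
      exact rhoOf_inj lam mu N hN T T' h1 h2 h
    have hNuEmpty : ∀ k' j', (¬ ∃ t, k' = bx + t ∧ j' = by' + t) →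
        NuSet lam mu k' j' = ∅ := by
      intro k' j' hne
      ext nu
      simp only [NuSet, Set.mem_setOf_eq, Set.mem_empty_iff_false, iff_false]
      rintro ⟨h1, h2, h3, h4⟩
      obtain ⟨T, hT, rfl⟩ := nu_classify lam mu N hN nu h1 h3
      rw [nuOf_size_left lam mu N hN T hT] at h2
      rw [nuOf_size_right lam mu N hN T hT] at h4
      exact hne ⟨T.card, h2.symm, h4.symm⟩
    have hRhoEmpty : ∀ j' k', (¬ ∃ t, k' = bx + t ∧ j' = by' + t) →
        RhoSet lam mu j' k' = ∅ := by
      intro j' k' hne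
      ext rho
      simp only [RhoSet, Set.mem_setOf_eq, Set.mem_empty_iff_false, iff_false]
      rintro ⟨h1, h2, h3, h4⟩
      obtain ⟨T, hT, rfl⟩ := rho_classify lam mu N hN E2 rho h1 h3
      rw [rhoOf_size_left lam mu N hN T hT, hbl] at h2
      rw [rhoOf_size_right lam mu N hN T hT, hbr] at h4
      exact hne ⟨T.card, h4.symm, h2.symm⟩
    by_cases hex : ∃ t, k = bx + t ∧ j = by' + t
    · obtain ⟨t, hkt, hjt⟩ := hex
      rcases t with _ | t'
      · have hNu1 : (NuSet lam mu k j).ncard = 1 := by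
          rw [hkt, hjt, hNuCard 0, Nat.choose_zero_right]
        have hRho1 : (RhoSet lam mu j k).ncard = 1 := by
          rw [hkt, hjt, hRhoCard 0, Nat.choose_zero_right]
        have hRho0 : (RhoSet lam mu (j-1) (k-1)).ncard = 0 := by
          rw [hRhoEmpty (j-1) (k-1) (by rintro ⟨t', h1, h2⟩; omega), Set.ncard_empty]
        omega
      · have hj1 : j - 1 = by' + t' := by omega
        have hk1 : k - 1 = bx + t' := by omega
        have hNu1 : (NuSet lam mu k j).ncard = ((IFin lam mu N).card).choose (t'+1) := by
          rw [hkt, hjt, hNuCard (t'+1)]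
        have hRho1 : (RhoSet lam mu j k).ncard = ((JFin lam mu N).card).choose (t'+1) := by
          rw [hkt, hjt, hRhoCard (t'+1)]
        have hRho2 : (RhoSet lam mu (j-1) (k-1)).ncard
            = ((JFin lam mu N).card).choose t' := by
          rw [hj1, hk1, hRhoCard t']
        rw [hNu1, hRho1, hRho2, card_IJ lam mu N hN E2, Nat.choose_succ_succ]
        simp only [Nat.succ_eq_add_one]
        omega
    · have h1 : (NuSet lam mu k j).ncard = 0 := by
        rw [hNuEmpty k j hex, Set.ncard_empty]
      have h2 : (RhoSet lam mu j k).ncard = 0 := by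
        rw [hRhoEmpty j k hex, Set.ncard_empty]
      have h3 : (RhoSet lam mu (j-1) (k-1)).ncard = 0 := by
        rw [hRhoEmpty (j-1) (k-1) ?_, Set.ncard_empty]
        rintro ⟨t', ha, hb⟩
        exact hex ⟨t' + 1, by omega, by omega⟩
      omega

end Ptn

namespace Ptn

open Finset Finsupp

theorem upStep_eq_lin (k : ℕ) (c : Ptn →₀ ℚ) :
    upStep k c = Finsupp.linearCombination ℚ
      (fun lam => ∑ᶠ nu ∈ {nu : Ptn | HStrip lam nu ∧ skewSize nu lam = k},
        Finsupp.single nu (1:ℚ)) c :=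
  (Finsupp.linearCombination_apply ℚ c).symm

theorem dualDownStep_eq_lin (j : ℕ) (c : Ptn →₀ ℚ) :
    dualDownStep j c = Finsupp.linearCombination ℚ
      (fun lam => ∑ᶠ mu ∈ {mu : Ptn | VStrip mu lam ∧ skewSize lam mu = j},
        Finsupp.single mu (1:ℚ)) c :=
  (Finsupp.linearCombination_apply ℚ c).symm

theorem upStep_add (k : ℕ) (c d : Ptn →₀ ℚ) :
    upStep k (c + d) = upStep k c + upStep k d :=
  Finsupp.sum_add_index' (fun _ => zero_smul _ _) (fun _ b1 b2 => add_smul b1 b2 _)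

theorem dualDownStep_add (j : ℕ) (c d : Ptn →₀ ℚ) :
    dualDownStep j (c + d) = dualDownStep j c + dualDownStep j d :=
  Finsupp.sum_add_index' (fun _ => zero_smul _ _) (fun _ b1 b2 => add_smul b1 b2 _)

theorem upStep_zero (k : ℕ) : upStep k (0 : Ptn →₀ ℚ) = 0 := Finsupp.sum_zero_index

theorem dualDownStep_zero (j : ℕ) : dualDownStep j (0 : Ptn →₀ ℚ) = 0 := Finsupp.sum_zero_index

theorem upStep_smul (k : ℕ) (b : ℚ) (c : Ptn →₀ ℚ) :
    upStep k (b • c) = b • upStep k c := by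
  rw [upStep_eq_lin, upStep_eq_lin, map_smul]

theorem dualDownStep_smul (j : ℕ) (b : ℚ) (c : Ptn →₀ ℚ) :
    dualDownStep j (b • c) = b • dualDownStep j c := by
  rw [dualDownStep_eq_lin, dualDownStep_eq_lin, map_smul]

theorem upStep_sum {α : Type*} (k : ℕ) (s : Finset α) (f : α → (Ptn →₀ ℚ)) :
    upStep k (∑ i ∈ s, f i) = ∑ i ∈ s, upStep k (f i) := by
  classical
  induction s using Finset.cons_induction with
  | empty => simp [upStep_zero]
  | cons a s ha ih => rw [Finset.sum_cons, Finset.sum_cons, upStep_add, ih]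

theorem dualDownStep_sum {α : Type*} (j : ℕ) (s : Finset α) (f : α → (Ptn →₀ ℚ)) :
    dualDownStep j (∑ i ∈ s, f i) = ∑ i ∈ s, dualDownStep j (f i) := by
  classical
  induction s using Finset.cons_induction with
  | empty => simp [dualDownStep_zero]
  | cons a s ha ih => rw [Finset.sum_cons, Finset.sum_cons, dualDownStep_add, ih]

/-- Finset of partitions obtained by adding a horizontal `k`-strip. -/
noncomputable def UF (lam : Ptn) (k : ℕ) : Finset Ptn := (finite_up lam k).toFinset

/-- Finset of partitions obtained by removing a vertical `j`-strip. -/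
noncomputable def DF (lam : Ptn) (j : ℕ) : Finset Ptn := (finite_down lam j).toFinset

theorem mem_UF (lam nu : Ptn) (k : ℕ) :
    nu ∈ UF lam k ↔ HStrip lam nu ∧ skewSize nu lam = k := by
  rw [UF, Set.Finite.mem_toFinset, Set.mem_setOf_eq]

theorem mem_DF (lam mu : Ptn) (j : ℕ) :
    mu ∈ DF lam j ↔ VStrip mu lam ∧ skewSize lam mu = j := by
  rw [DF, Set.Finite.mem_toFinset, Set.mem_setOf_eq]

theorem upStep_single (k : ℕ) (lam : Ptn) :
    upStep k (Finsupp.single lam 1) = ∑ nu ∈ UF lam k, Finsupp.single nu (1:ℚ) := by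
  rw [upStep_eq_lin, Finsupp.linearCombination_single, one_smul,
    finsum_mem_eq_finite_toFinset_sum _ (finite_up lam k)]
  rfl

theorem dualDownStep_single (j : ℕ) (lam : Ptn) :
    dualDownStep j (Finsupp.single lam 1) = ∑ mu ∈ DF lam j, Finsupp.single mu (1:ℚ) := by
  rw [dualDownStep_eq_lin, Finsupp.linearCombination_single, one_smul,
    finsum_mem_eq_finite_toFinset_sum _ (finite_down lam j)]
  rfl

theorem upStep_id (c : Ptn →₀ ℚ) : upStep 0 c = c := by
  have hset : ∀ lam : Ptn, {nu : Ptn | HStrip lam nu ∧ skewSize nu lam = 0} = {lam} := by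
    intro lam
    ext nu
    simp only [Set.mem_setOf_eq, Set.mem_singleton_iff]
    constructor
    · rintro ⟨h1, h2⟩
      obtain ⟨M, hM⟩ := exists_bound nu lam
      rw [skewSize_eq_sum nu lam M (fun i hi => (hM i hi).1)] at h2
      apply pext
      intro i
      by_cases hi : i < M
      · have := Finset.sum_eq_zero_iff.mp h2 i (Finset.mem_range.mpr hi)
        have := h1.1 i
        omega
      · have := hM i (by omega)
        omega
    · rintro rfl
      refine ⟨⟨fun i => le_refl _, fun i => Ptn.anti _ (by omega : i ≤ i + 1)⟩, ?_⟩
      obtain ⟨M, hM⟩ := Ptn.fin _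
      rw [skewSize_eq_sum _ _ M hM]
      exact Finset.sum_eq_zero fun i _ => by omega
  have : ∀ (lam : Ptn) (a : ℚ),
      (a • ∑ᶠ nu ∈ {nu : Ptn | HStrip lam nu ∧ skewSize nu lam = 0},
        Finsupp.single nu (1:ℚ)) = Finsupp.single lam a := by
    intro lam a
    rw [hset lam, finsum_mem_singleton, Finsupp.smul_single, smul_eq_mul, mul_one]
  rw [upStep, Finsupp.sum_congr (fun l _ => this l _)]
  exact Finsupp.sum_single c

theorem dualDownStep_id (c : Ptn →₀ ℚ) : dualDownStep 0 c = c := by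
  have hset : ∀ lam : Ptn, {mu : Ptn | VStrip mu lam ∧ skewSize lam mu = 0} = {lam} := by
    intro lam
    ext mu
    simp only [Set.mem_setOf_eq, Set.mem_singleton_iff]
    constructor
    · rintro ⟨h1, h2⟩
      obtain ⟨M, hM⟩ := exists_bound lam mu
      rw [skewSize_eq_sum lam mu M (fun i hi => (hM i hi).1)] at h2
      apply pext
      intro i
      by_cases hi : i < M
      · have := Finset.sum_eq_zero_iff.mp h2 i (Finset.mem_range.mpr hi)
        have := h1.1 i
        omega
      · have := hM i (by omega)
        have := h1.1 i
        omega
    · rintro rfl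
      refine ⟨⟨fun i => le_refl _, fun i => by omega⟩, ?_⟩
      obtain ⟨M, hM⟩ := Ptn.fin _
      rw [skewSize_eq_sum _ _ M hM]
      exact Finset.sum_eq_zero fun i _ => by omega
  have : ∀ (lam : Ptn) (a : ℚ),
      (a • ∑ᶠ mu ∈ {mu : Ptn | VStrip mu lam ∧ skewSize lam mu = 0},
        Finsupp.single mu (1:ℚ)) = Finsupp.single lam a := by
    intro lam a
    rw [hset lam, finsum_mem_singleton, Finsupp.smul_single, smul_eq_mul, mul_one]
  rw [dualDownStep, Finsupp.sum_congr (fun l _ => this l _)]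
  exact Finsupp.sum_single c

theorem comp_du (j k : ℕ) (lam : Ptn) :
    dualDownStep j (upStep k (Finsupp.single lam 1))
      = ∑ nu ∈ UF lam k, ∑ mu ∈ DF nu j, Finsupp.single mu (1:ℚ) := by
  rw [upStep_single, dualDownStep_sum]
  exact Finset.sum_congr rfl fun nu _ => dualDownStep_single j nu

theorem comp_ud (j k : ℕ) (lam : Ptn) :
    upStep k (dualDownStep j (Finsupp.single lam 1))
      = ∑ rho ∈ DF lam j, ∑ mu ∈ UF rho k, Finsupp.single mu (1:ℚ) := by
  rw [dualDownStep_single, upStep_sum]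
  exact Finset.sum_congr rfl fun rho _ => upStep_single k rho

theorem coeff_du (j k : ℕ) (lam mu0 : Ptn) :
    (dualDownStep j (upStep k (Finsupp.single lam 1))) mu0
      = (NuSet lam mu0 k j).ncard := by
  classical
  rw [comp_du, Finsupp.finset_sum_apply]
  have h1 : ∀ nu : Ptn, (∑ mu ∈ DF nu j, Finsupp.single mu (1:ℚ)) mu0
      = if mu0 ∈ DF nu j then 1 else 0 := by
    intro nu
    rw [Finsupp.finset_sum_apply]
    rw [Finset.sum_congr rfl (fun mu _ => Finsupp.single_apply (a := mu) (a' := mu0) (b := (1:ℚ)))]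
    exact Finset.sum_ite_eq' (DF nu j) mu0 (fun _ => 1)
  rw [Finset.sum_congr rfl fun nu _ => h1 nu, Finset.sum_boole]
  have h2 : NuSet lam mu0 k j = ↑((UF lam k).filter (fun nu => mu0 ∈ DF nu j)) := by
    ext nu
    simp only [NuSet, Set.mem_setOf_eq, Finset.coe_filter, mem_UF, mem_DF]
    tauto
  rw [h2, Set.ncard_coe_finset]

theorem coeff_ud (j k : ℕ) (lam mu0 : Ptn) :
    (upStep k (dualDownStep j (Finsupp.single lam 1))) mu0
      = (RhoSet lam mu0 j k).ncard := by
  classical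
  rw [comp_ud, Finsupp.finset_sum_apply]
  have h1 : ∀ rho : Ptn, (∑ mu ∈ UF rho k, Finsupp.single mu (1:ℚ)) mu0
      = if mu0 ∈ UF rho k then 1 else 0 := by
    intro rho
    rw [Finsupp.finset_sum_apply]
    rw [Finset.sum_congr rfl (fun mu _ => Finsupp.single_apply (a := mu) (a' := mu0) (b := (1:ℚ)))]
    exact Finset.sum_ite_eq' (UF rho k) mu0 (fun _ => 1)
  rw [Finset.sum_congr rfl fun rho _ => h1 rho, Finset.sum_boole]
  have h2 : RhoSet lam mu0 j k = ↑((DF lam j).filter (fun rho => mu0 ∈ UF rho k)) := by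
    ext rho
    simp only [RhoSet, Set.mem_setOf_eq, Finset.coe_filter, mem_UF, mem_DF]
    tauto
  rw [h2, Set.ncard_coe_finset]

theorem step_comm_single (j k : ℕ) (hj : 1 ≤ j) (hk : 1 ≤ k) (lam : Ptn) :
    dualDownStep j (upStep k (Finsupp.single lam 1))
      = upStep k (dualDownStep j (Finsupp.single lam 1))
        + upStep (k-1) (dualDownStep (j-1) (Finsupp.single lam 1)) := by
  ext mu0
  rw [Finsupp.add_apply, coeff_du, coeff_ud, coeff_ud]
  rw [count_key lam mu0 j k hj hk]
  push_cast
  ring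

theorem step_comm (j k : ℕ) (hj : 1 ≤ j) (hk : 1 ≤ k) (c : Ptn →₀ ℚ) :
    dualDownStep j (upStep k c)
      = upStep k (dualDownStep j c) + upStep (k-1) (dualDownStep (j-1) c) := by
  induction c using Finsupp.induction_linear with
  | zero => simp [upStep_zero, dualDownStep_zero]
  | add f g hf hg =>
    rw [upStep_add, dualDownStep_add, hf, hg, dualDownStep_add, dualDownStep_add,
      upStep_add, upStep_add]
    abel
  | single a b =>
    have hb : Finsupp.single a b = b • Finsupp.single a (1:ℚ) := by
      rw [Finsupp.smul_single, smul_eq_mul, mul_one]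
    rw [hb, upStep_smul, dualDownStep_smul, dualDownStep_smul, dualDownStep_smul,
      upStep_smul, upStep_smul, step_comm_single j k hj hk a, smul_add]

end Ptn

namespace Ptn

open Finset

theorem reindex_aux (m : ℕ) (h : ℕ → (Ptn →₀ ℚ)) :
    ∑ k ∈ Finset.range (m+1), (if 1 ≤ k then h k else 0)
      = ∑ k ∈ Finset.range m, h (k+1) := by
  rw [Finset.sum_range_succ' (fun k => if 1 ≤ k then h k else 0) m,
    if_neg (by omega), add_zero]
  exact Finset.sum_congr rfl fun k _ => if_pos (by omega)

theorem reindex (n m : ℕ) (g : ℕ → ℕ → (Ptn →₀ ℚ)) :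
    ∑ j ∈ Finset.range (n+1), ∑ k ∈ Finset.range (m+1),
        (if 1 ≤ j ∧ 1 ≤ k then g j k else 0)
      = ∑ j ∈ Finset.range n, ∑ k ∈ Finset.range m, g (j+1) (k+1) := by
  have hout : ∀ j, (∑ k ∈ Finset.range (m+1), (if 1 ≤ j ∧ 1 ≤ k then g j k else 0))
      = if 1 ≤ j then ∑ k ∈ Finset.range m, g j (k+1) else 0 := by
    intro j
    by_cases hj : 1 ≤ j
    · rw [if_pos hj]
      have hc : ∀ k ∈ Finset.range (m+1), (if 1 ≤ j ∧ 1 ≤ k then g j k else 0)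
          = (if 1 ≤ k then g j k else 0) := by
        intro k _
        by_cases h : 1 ≤ k
        · rw [if_pos ⟨hj, h⟩, if_pos h]
        · rw [if_neg (by tauto), if_neg h]
      rw [Finset.sum_congr rfl hc]
      exact reindex_aux m (g j)
    · rw [if_neg hj]
      exact Finset.sum_eq_zero fun k _ => if_neg (by tauto)
  rw [Finset.sum_congr rfl (fun j _ => hout j)]
  exact reindex_aux n (fun j => ∑ k ∈ Finset.range m, g j (k+1))

theorem step_comm_full (j k : ℕ) (c : Ptn →₀ ℚ) :
    dualDownStep j (upStep k c)
      = upStep k (dualDownStep j c)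
        + (if 1 ≤ j ∧ 1 ≤ k then upStep (k-1) (dualDownStep (j-1) c) else 0) := by
  rcases Nat.eq_zero_or_pos j with hj | hj
  · subst hj
    rw [dualDownStep_id, dualDownStep_id, if_neg (by omega), add_zero]
  · rcases Nat.eq_zero_or_pos k with hk | hk
    · subst hk
      rw [upStep_id, upStep_id, if_neg (by omega), add_zero]
    · rw [step_comm j k hj hk c, if_pos ⟨hj, hk⟩]

end Ptn

section Final

open Ptn Finset

theorem up_dual_down_commutation' (F : YSeries) :
    DualDop (Uop F) =
      smulSeries ((1 + MvPowerSeries.X 0 * MvPowerSeries.X 1 :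
        MvPowerSeries (Fin 2) ℚ)) (Uop (DualDop F)) := by
  classical
  funext d
  set E : Fin 2 →₀ ℕ := Finsupp.single 0 1 + Finsupp.single 1 1 with hE
  have hs0 : ∀ m : ℕ, (Finsupp.single (0 : Fin 2) m) 0 = m := fun m => by
    rw [Finsupp.single_apply, if_pos rfl]
  have hs01 : ∀ m : ℕ, (Finsupp.single (0 : Fin 2) m) 1 = 0 := fun m => by
    rw [Finsupp.single_apply, if_neg (by decide)]
  have hs1 : ∀ m : ℕ, (Finsupp.single (1 : Fin 2) m) 1 = m := fun m => by
    rw [Finsupp.single_apply, if_pos rfl]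
  have hs10 : ∀ m : ℕ, (Finsupp.single (1 : Fin 2) m) 0 = 0 := fun m => by
    rw [Finsupp.single_apply, if_neg (by decide)]
  have hE0 : E 0 = 1 := by
    rw [hE, Finsupp.add_apply, hs0 1, hs10 1]
  have hE1 : E 1 = 1 := by
    rw [hE, Finsupp.add_apply, hs01 1, hs1 1]
  set P : ℕ → ℕ → (Fin 2 →₀ ℕ) :=
    fun j k => d - Finsupp.single 1 j - Finsupp.single 0 k with hP
  set G : YSeries := Uop (DualDop F) with hG
  -- Left side expansion
  have hL : DualDop (Uop F) d = ∑ j ∈ range (d 1 + 1), ∑ k ∈ range (d 0 + 1),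
      dualDownStep j (upStep k (F (P j k))) := by
    show ∑ j ∈ range (d 1 + 1), dualDownStep j (Uop F (d - Finsupp.single 1 j)) = _
    apply Finset.sum_congr rfl
    intro j hj
    have h0 : (d - Finsupp.single 1 j : Fin 2 →₀ ℕ) 0 = d 0 := by
      rw [Finsupp.tsub_apply, hs10]
      omega
    show dualDownStep j (∑ k ∈ range ((d - Finsupp.single 1 j : Fin 2 →₀ ℕ) 0 + 1),
      upStep k (F (d - Finsupp.single 1 j - Finsupp.single 0 k))) = _
    rw [h0, dualDownStep_sum]
  -- A = G d
  have hA : G d = ∑ j ∈ range (d 1 + 1), ∑ k ∈ range (d 0 + 1),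
      upStep k (dualDownStep j (F (P j k))) := by
    rw [Finset.sum_comm]
    show ∑ k ∈ range (d 0 + 1), upStep k (DualDop F (d - Finsupp.single 0 k)) = _
    apply Finset.sum_congr rfl
    intro k hk
    have h1 : (d - Finsupp.single 0 k : Fin 2 →₀ ℕ) 1 = d 1 := by
      rw [Finsupp.tsub_apply, hs01]
      omega
    show upStep k (∑ j ∈ range ((d - Finsupp.single 0 k : Fin 2 →₀ ℕ) 1 + 1),
      dualDownStep j (F (d - Finsupp.single 0 k - Finsupp.single 1 j))) = _
    rw [h1, upStep_sum]
    apply Finset.sum_congr rfl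
    intro j hj
    have harg : d - Finsupp.single 0 k - Finsupp.single 1 j = P j k := by
      apply Finsupp.ext
      rw [Fin.forall_fin_two]
      constructor
      · rw [hP]
        simp only [Finsupp.tsub_apply]
        rw [hs0, hs10]
        omega
      · rw [hP]
        simp only [Finsupp.tsub_apply]
        rw [hs01, hs1]
        omega
    rw [harg]
  -- LHS = A + B
  have hLB : DualDop (Uop F) d = G d + ∑ j ∈ range (d 1 + 1), ∑ k ∈ range (d 0 + 1),
      (if 1 ≤ j ∧ 1 ≤ k then upStep (k-1) (dualDownStep (j-1) (F (P j k))) else 0) := by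
    rw [hL, hA, ← Finset.sum_add_distrib]
    apply Finset.sum_congr rfl
    intro j _
    rw [← Finset.sum_add_distrib]
    exact Finset.sum_congr rfl fun k _ => step_comm_full j k (F (P j k))
  -- coefficient computation
  have hcoeff : ∀ p : Fin 2 →₀ ℕ,
      MvPowerSeries.coeff p (1 + MvPowerSeries.X 0 * MvPowerSeries.X 1 :
        MvPowerSeries (Fin 2) ℚ)
      = (if p = 0 then 1 else 0) + (if p = E then 1 else 0) := by
    intro p
    rw [map_add, MvPowerSeries.coeff_one]
    congr 1
    have hx : (MvPowerSeries.X 0 * MvPowerSeries.X 1 : MvPowerSeries (Fin 2) ℚ)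
        = MvPowerSeries.monomial E 1 := by
      rw [MvPowerSeries.X_def, MvPowerSeries.X_def, MvPowerSeries.monomial_mul_monomial,
        one_mul, hE]
    rw [hx, MvPowerSeries.coeff_monomial]
  -- RHS expansion
  have hR : smulSeries ((1 + MvPowerSeries.X 0 * MvPowerSeries.X 1 :
      MvPowerSeries (Fin 2) ℚ)) G d
      = (∑ p ∈ Finset.HasAntidiagonal.antidiagonal d, (if p.1 = 0 then (1:ℚ) else 0) • G p.2)
        + (∑ p ∈ Finset.HasAntidiagonal.antidiagonal d, (if p.1 = E then (1:ℚ) else 0) • G p.2) := by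
    show ∑ p ∈ Finset.HasAntidiagonal.antidiagonal d,
      MvPowerSeries.coeff p.1 _ • G p.2 = _
    rw [← Finset.sum_add_distrib]
    apply Finset.sum_congr rfl
    intro p _
    rw [hcoeff p.1, add_smul]
  have hS1 : (∑ p ∈ Finset.HasAntidiagonal.antidiagonal d, (if p.1 = 0 then (1:ℚ) else 0) • G p.2)
      = G d := by
    rw [Finset.sum_eq_single_of_mem ((0 : Fin 2 →₀ ℕ), d)
      (Finset.HasAntidiagonal.mem_antidiagonal.mpr (zero_add d))]
    · rw [if_pos rfl, one_smul]
    · intro p hp hne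
      rw [if_neg, zero_smul]
      intro hp1
      apply hne
      have := Finset.HasAntidiagonal.mem_antidiagonal.mp hp
      rw [hp1, zero_add] at this
      exact Prod.ext hp1 this
  rw [hLB, hR, hS1]
  congr 1
  -- remaining: B = S2
  by_cases hd : 1 ≤ d 0 ∧ 1 ≤ d 1
  · -- S2 = G (d - E)
    have hmem : (E, d - E) ∈ Finset.HasAntidiagonal.antidiagonal d := by
      rw [Finset.HasAntidiagonal.mem_antidiagonal]
      apply Finsupp.ext
      rw [Fin.forall_fin_two]
      constructor
      · rw [Finsupp.add_apply, Finsupp.tsub_apply, hE0]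
        omega
      · rw [Finsupp.add_apply, Finsupp.tsub_apply, hE1]
        omega
    have hS2 : (∑ p ∈ Finset.HasAntidiagonal.antidiagonal d, (if p.1 = E then (1:ℚ) else 0) • G p.2)
        = G (d - E) := by
      rw [Finset.sum_eq_single_of_mem (E, d - E) hmem]
      · rw [if_pos rfl, one_smul]
      · intro p hp hne
        rw [if_neg, zero_smul]
        intro hp1
        apply hne
        have h2 := Finset.HasAntidiagonal.mem_antidiagonal.mp hp
        have h3 : p.2 = d - E := by
          have h4 : ∀ a, E a + p.2 a = d a := by
            intro a
            rw [← hp1, ← Finsupp.add_apply, h2]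
          apply Finsupp.ext
          intro a
          rw [Finsupp.tsub_apply]
          have := h4 a
          omega
        exact Prod.ext hp1 h3
    rw [hS2]
    -- G (d - E) expansion
    have hdE0 : (d - E : Fin 2 →₀ ℕ) 0 = d 0 - 1 := by rw [Finsupp.tsub_apply, hE0]
    have hGE1 : G (d - E) = ∑ k ∈ range (d 0), ∑ j ∈ range (d 1),
        upStep k (dualDownStep j (F (P (j+1) (k+1)))) := by
      show ∑ k ∈ range ((d - E : Fin 2 →₀ ℕ) 0 + 1), upStep k (DualDop F (d - E - Finsupp.single 0 k)) = _
      rw [hdE0, Nat.sub_add_cancel hd.1]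
      apply Finset.sum_congr rfl
      intro k hk
      have h1 : (d - E - Finsupp.single 0 k : Fin 2 →₀ ℕ) 1 = d 1 - 1 := by
        rw [Finsupp.tsub_apply, Finsupp.tsub_apply, hs01, hE1]
        omega
      show upStep k (∑ j ∈ range ((d - E - Finsupp.single 0 k : Fin 2 →₀ ℕ) 1 + 1),
        dualDownStep j (F (d - E - Finsupp.single 0 k - Finsupp.single 1 j))) = _
      rw [h1, Nat.sub_add_cancel hd.2, upStep_sum]
      apply Finset.sum_congr rfl
      intro j hj
      have harg : d - E - Finsupp.single 0 k - Finsupp.single 1 j = P (j+1) (k+1) := by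
        apply Finsupp.ext
        rw [Fin.forall_fin_two]
        constructor
        · rw [hP]
          simp only [Finsupp.tsub_apply]
          rw [hs0, hs10, hE0, hs10, hs0]
          omega
        · rw [hP]
          simp only [Finsupp.tsub_apply]
          rw [hs01, hs1, hE1, hs1, hs01]
          omega
      rw [harg]
    have hGE : G (d - E) = ∑ j ∈ range (d 1), ∑ k ∈ range (d 0),
        upStep k (dualDownStep j (F (P (j+1) (k+1)))) := by
      rw [hGE1]
      exact Finset.sum_comm
    rw [hGE, reindex (d 1) (d 0)
      (fun j k => upStep (k-1) (dualDownStep (j-1) (F (P j k))))]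
    apply Finset.sum_congr rfl
    intro j _
    apply Finset.sum_congr rfl
    intro k _
    simp only [Nat.add_sub_cancel]
  · -- both sides zero
    have hB : (∑ j ∈ range (d 1 + 1), ∑ k ∈ range (d 0 + 1),
        (if 1 ≤ j ∧ 1 ≤ k then upStep (k-1) (dualDownStep (j-1) (F (P j k))) else 0))
        = 0 := by
      apply Finset.sum_eq_zero
      intro j hj
      apply Finset.sum_eq_zero
      intro k hk
      rw [Finset.mem_range] at hj hk
      rw [if_neg]
      rintro ⟨h1, h2⟩
      exact hd ⟨by omega, by omega⟩
    have hS2 : (∑ p ∈ Finset.HasAntidiagonal.antidiagonal d, (if p.1 = E then (1:ℚ) else 0) • G p.2)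
        = 0 := by
      apply Finset.sum_eq_zero
      intro p hp
      rw [if_neg, zero_smul]
      intro hp1
      apply hd
      have h2 := Finset.HasAntidiagonal.mem_antidiagonal.mp hp
      constructor
      · have : p.1 0 + p.2 0 = d 0 := by rw [← h2]; rw [Finsupp.add_apply]
        rw [hp1, hE0] at this
        omega
      · have : p.1 1 + p.2 1 = d 1 := by rw [← h2]; rw [Finsupp.add_apply]
        rw [hp1, hE1] at this
        omega
    rw [hB, hS2]

end Final

open Ptn in
/-- The commutation relation `D*_y ∘ U_x = (1 + xy) · U_x ∘ D*_y` for the up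
and dual down operators on `Y⟦x,y⟧`. -/
theorem up_dual_down_commutation (F : YSeries) :
    DualDop (Uop F) =
      smulSeries ((1 + MvPowerSeries.X 0 * MvPowerSeries.X 1 :
        MvPowerSeries (Fin 2) ℚ)) (Uop (DualDop F)) := by
  exact up_dual_down_commutation' F
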